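/- There exist five pairwise distinct points X_1, …, X_5 in ℝ³ such that the uniform Hermite interpolation problem of order 1 is regular on Π_3^3: for every family of real values c_{q,α} (1 ≤ q ≤ 5, α ∈ ℕ³ with |α| ≤ 1) there exists a unique polynomial f in three variables of total degree at most 3 with ∂^α f(X_q) = c_{q,α} for all 1 ≤ q ≤ 5 and all |α| ≤ 1. (Note the dimension count binom(3+3,3) = 20 = 5·binom(1+3,3).) -/

import Mathlib

open MvPolynomial

/-- The iterated partial derivative `∂^α` as a linear endomorphism of `ℝ[x_1,…,x_d]`. -/
noncomputable def pderivPow {d : ℕ} (α : Fin d → ℕ) :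
    Module.End ℝ (MvPolynomial (Fin d) ℝ) :=
  ((List.finRange d).map fun i => ((MvPolynomial.pderiv i).toLinearMap ^ α i)).prod

theorem sum20 {M : Type*} [AddCommMonoid M] (v : Fin 20 → M) :
    ∑ j, v j = v 0 + (v 1 + (v 2 + (v 3 + (v 4 + (v 5 + (v 6 + (v 7 + (v 8 + (v 9 + (v 10 +
      (v 11 + (v 12 + (v 13 + (v 14 + (v 15 + (v 16 + (v 17 + (v 18 + v 19)))))))))))))))))) := by
  simp [Fin.sum_univ_succ]
noncomputable def sgl (a b c : ℕ) : Fin 3 →₀ ℕ :=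
  Finsupp.single 0 a + Finsupp.single 1 b + Finsupp.single 2 c

def tbl : Fin 20 → ℕ × ℕ × ℕ :=
  ![(0,0,0), (0,0,1), (0,0,2), (0,0,3), (0,1,0), (0,1,1), (0,1,2), (0,2,0), (0,2,1), (0,3,0),
    (1,0,0), (1,0,1), (1,0,2), (1,1,0), (1,1,1), (1,2,0), (2,0,0), (2,0,1), (2,1,0), (3,0,0)]

noncomputable def Ee : Fin 20 → (Fin 3 →₀ ℕ) := fun j => sgl (tbl j).1 (tbl j).2.1 (tbl j).2.2

example : Ee 19 = sgl 3 0 0 := rfl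

theorem Ee0 : Ee 0 = sgl 0 0 0 := rfl
theorem Ee1 : Ee 1 = sgl 0 0 1 := rfl
theorem Ee2 : Ee 2 = sgl 0 0 2 := rfl
theorem Ee3 : Ee 3 = sgl 0 0 3 := rfl
theorem Ee4 : Ee 4 = sgl 0 1 0 := rfl
theorem Ee5 : Ee 5 = sgl 0 1 1 := rfl
theorem Ee6 : Ee 6 = sgl 0 1 2 := rfl
theorem Ee7 : Ee 7 = sgl 0 2 0 := rfl
theorem Ee8 : Ee 8 = sgl 0 2 1 := rfl
theorem Ee9 : Ee 9 = sgl 0 3 0 := rfl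
theorem Ee10 : Ee 10 = sgl 1 0 0 := rfl
theorem Ee11 : Ee 11 = sgl 1 0 1 := rfl
theorem Ee12 : Ee 12 = sgl 1 0 2 := rfl
theorem Ee13 : Ee 13 = sgl 1 1 0 := rfl
theorem Ee14 : Ee 14 = sgl 1 1 1 := rfl
theorem Ee15 : Ee 15 = sgl 1 2 0 := rfl
theorem Ee16 : Ee 16 = sgl 2 0 0 := rfl
theorem Ee17 : Ee 17 = sgl 2 0 1 := rfl
theorem Ee18 : Ee 18 = sgl 2 1 0 := rfl
theorem Ee19 : Ee 19 = sgl 3 0 0 := rfl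

theorem sglsum (a b c : ℕ) : ((sgl a b c).sum fun _ n => n) = a + b + c := by
  rw [Finsupp.sum_fintype _ _ (fun _ => rfl), Fin.sum_univ_three]
  simp [sgl, Finsupp.single_apply]

theorem sgl_inj {a b c a' b' c' : ℕ} (h : sgl a b c = sgl a' b' c') : a = a' ∧ b = b' ∧ c = c' := by
  have h0 := DFunLike.congr_fun h 0
  have h1 := DFunLike.congr_fun h 1
  have h2 := DFunLike.congr_fun h 2
  simp [sgl, Finsupp.single_apply] at h0 h1 h2
  exact ⟨h0, h1, h2⟩

theorem tblInj : Function.Injective tbl := by decide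

theorem EeInj : Function.Injective Ee := by
  intro j j' h
  obtain ⟨h1, h2, h3⟩ := sgl_inj h
  exact tblInj (Prod.ext h1 (Prod.ext h2 h3))

theorem degEe : ∀ j : Fin 20, ((Ee j).sum fun _ n => n) ≤ 3 := by
  intro j
  rw [show Ee j = sgl (tbl j).1 (tbl j).2.1 (tbl j).2.2 from rfl, sglsum]
  revert j; decide

set_option maxHeartbeats 4000000 in
theorem enumEe (m : Fin 3 →₀ ℕ) (hm : (m.sum fun _ n => n) ≤ 3) : ∃ j : Fin 20, Ee j = m := by
  have hmeq : m = sgl (m 0) (m 1) (m 2) := by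
    ext i; fin_cases i <;> simp [sgl, Finsupp.single_apply]
  have hb : m 0 + m 1 + m 2 ≤ 3 := by
    rw [hmeq, sglsum] at hm; exact hm
  set a := m 0 with ha; set b := m 1 with hbb; set c := m 2 with hc
  clear_value a b c
  have ha3 : a ≤ 3 := by omega
  have hb3 : b ≤ 3 := by omega
  have hc3 : c ≤ 3 := by omega
  interval_cases a <;> interval_cases b <;> interval_cases c <;>
    first
      | omega
      | exact ⟨0, Ee0.trans hmeq.symm⟩ | exact ⟨1, Ee1.trans hmeq.symm⟩ | exact ⟨2, Ee2.trans hmeq.symm⟩ | exact ⟨3, Ee3.trans hmeq.symm⟩ | exact ⟨4, Ee4.trans hmeq.symm⟩ | exact ⟨5, Ee5.trans hmeq.symm⟩ | exact ⟨6, Ee6.trans hmeq.symm⟩ | exact ⟨7, Ee7.trans hmeq.symm⟩ | exact ⟨8, Ee8.trans hmeq.symm⟩ | exact ⟨9, Ee9.trans hmeq.symm⟩ | exact ⟨10, Ee10.trans hmeq.symm⟩ | exact ⟨11, Ee11.trans hmeq.symm⟩ | exact ⟨12, Ee12.trans hmeq.symm⟩ | exact ⟨13, Ee13.trans hmeq.symm⟩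 | exact ⟨14, Ee14.trans hmeq.symm⟩ | exact ⟨15, Ee15.trans hmeq.symm⟩ | exact ⟨16, Ee16.trans hmeq.symm⟩ | exact ⟨17, Ee17.trans hmeq.symm⟩ | exact ⟨18, Ee18.trans hmeq.symm⟩ | exact ⟨19, Ee19.trans hmeq.symm⟩

theorem repSum (f : MvPolynomial (Fin 3) ℝ) (h : f.totalDegree ≤ 3) :
    f = ∑ j, monomial (Ee j) (coeff (Ee j) f) := by
  ext m
  rw [coeff_sum]
  simp only [coeff_monomial]
  by_cases hm : (m.sum fun _ n => n) ≤ 3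
  · obtain ⟨j0, hj0⟩ := enumEe m hm
    rw [Finset.sum_eq_single j0]
    · rw [if_pos hj0, hj0]
    · intro b _ hb
      rw [if_neg]
      intro hbm
      exact hb (EeInj (hbm.trans hj0.symm))
    · intro hj0'; exact absurd (Finset.mem_univ j0) hj0'
  · have hz : coeff m f = 0 := by
      apply coeff_eq_zero_of_totalDegree_lt
      have : (m.sum fun _ n => n) = ∑ i ∈ m.support, m i := rfl
      omega
    rw [hz]
    symm
    apply Finset.sum_eq_zero
    intro j _
    rw [if_neg]
    intro hjm
    exact hm (hjm ▸ degEe j)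
def ek0 : Fin 3 → ℕ := fun _ => 0
def ek1 : Fin 3 → ℕ := fun i => if i = 0 then 1 else 0
def ek2 : Fin 3 → ℕ := fun i => if i = 1 then 1 else 0
def ek3 : Fin 3 → ℕ := fun i => if i = 2 then 1 else 0

theorem pp_id (α : Fin 3 → ℕ) (h0 : α 0 = 0) (h1 : α 1 = 0) (h2 : α 2 = 0)
    (f : MvPolynomial (Fin 3) ℝ) : pderivPow α f = f := by
  rw [pderivPow, show List.finRange 3 = [0,1,2] from rfl]; simp [h0, h1, h2]

theorem pp_d0 (α : Fin 3 → ℕ) (h0 : α 0 = 1) (h1 : α 1 = 0) (h2 : α 2 = 0)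
    (f : MvPolynomial (Fin 3) ℝ) : pderivPow α f = pderiv 0 f := by
  rw [pderivPow, show List.finRange 3 = [0,1,2] from rfl]; simp [h0, h1, h2]

theorem pp_d1 (α : Fin 3 → ℕ) (h0 : α 0 = 0) (h1 : α 1 = 1) (h2 : α 2 = 0)
    (f : MvPolynomial (Fin 3) ℝ) : pderivPow α f = pderiv 1 f := by
  rw [pderivPow, show List.finRange 3 = [0,1,2] from rfl]; simp [h0, h1, h2]

theorem pp_d2 (α : Fin 3 → ℕ) (h0 : α 0 = 0) (h1 : α 1 = 0) (h2 : α 2 = 1)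
    (f : MvPolynomial (Fin 3) ℝ) : pderivPow α f = pderiv 2 f := by
  rw [pderivPow, show List.finRange 3 = [0,1,2] from rfl]; simp [h0, h1, h2]

example : ek1 0 = 1 := rfl
example : ek1 1 = 0 := rfl
example : (∑ i, ek1 i) ≤ 1 := by norm_num [Fin.sum_univ_three, ek1]
example : (∑ i, ek0 i) ≤ 1 := by norm_num [Fin.sum_univ_three, ek0]

theorem fin5cases (q : Fin 5) : q = 0 ∨ q = 1 ∨ q = 2 ∨ q = 3 ∨ q = 4 := by fin_cases q <;> simp
example (α : Fin 3 → ℕ) (e0 : α 0 = 1) (e1 : α 1 = 0) (e2 : α 2 = 0) : α = ek1 := by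
  funext i; fin_cases i <;> first | exact e0 | exact e1 | exact e2

theorem tdadd {a b : MvPolynomial (Fin 3) ℝ} (ha : a.totalDegree ≤ 3)
    (hb : b.totalDegree ≤ 3) : (a + b).totalDegree ≤ 3 :=
  le_trans (totalDegree_add a b) (max_le ha hb)

theorem tdmon {a b c : ℕ} {r : ℝ} (h : a + b + c ≤ 3) :
    (monomial (sgl a b c) r).totalDegree ≤ 3 :=
  le_trans (totalDegree_monomial_le _ _) (by
    have h2 : ((sgl a b c).sum fun _ => id) = a + b + c := sglsum a b c
    omega)

theorem Xinj : Function.Injective (![![(0:ℝ),0,0], ![1,0,0], ![0,1,0], ![0,0,1], ![1,1,1]]) := by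
  intro a b h
  have h0 := congrFun h 0
  have h1 := congrFun h 1
  have h2 := congrFun h 2
  fin_cases a <;> fin_cases b <;> first | rfl | (norm_num at h0; done) | (norm_num at h1; done) | (norm_num at h2; done) | (change (0:ℝ) = 1 at h2; norm_num at h2) | (change (1:ℝ) = 0 at h2; norm_num at h2)

theorem rep (f : MvPolynomial (Fin 3) ℝ) (h : f.totalDegree ≤ 3) :
    ∃ u : Fin 20 → ℝ, f = monomial (sgl 0 0 0) (u 0) + (monomial (sgl 0 0 1) (u 1) + (monomial (sgl 0 0 2) (u 2) + (monomial (sgl 0 0 3) (u 3) + (monomial (sgl 0 1 0) (u 4) + (monomial (sgl 0 1 1) (u 5) + (monomial (sgl 0 1 2) (u 6) + (monomial (sgl 0 2 0) (u 7) + (monomial (sgl 0 2 1) (u 8) + (monomial (sgl 0 3 0) (u 9) + (monomial (sgl 1 0 0) (u 10) + (monomial (sgl 1 0 1) (u 11) + (monomial (sgl 1 0 2) (u 12) + (monomial (sgl 1 1 0) (u 13) + (monomial (sgl 1 1 1) (u 14) + (monomial (sgl 1 2 0) (u 15) + (monomial (sgl 2 0 0) (u 16) + (monomial (sgl 2 0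 1) (u 17) + (monomial (sgl 2 1 0) (u 18) + (monomial (sgl 3 0 0) (u 19)))))))))))))))))))) := by
  use fun j => coeff (Ee j) f
  conv_lhs => rw [repSum f h, sum20]
  simp only [Ee0, Ee1, Ee2, Ee3, Ee4, Ee5, Ee6, Ee7, Ee8, Ee9, Ee10, Ee11, Ee12, Ee13, Ee14, Ee15, Ee16, Ee17, Ee18, Ee19]

set_option maxHeartbeats 0 in
/-- There exist 5 pairwise distinct nodes in `ℝ³` for which uniform Hermite interpolation
of order 1 is regular on `Π_3^3`. -/
theorem exists_regular_five_nodes_order_one :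
    ∃ X : Fin 5 → (Fin 3 → ℝ), Function.Injective X ∧
      ∀ c : Fin 5 → (Fin 3 → ℕ) → ℝ, ∃! f : MvPolynomial (Fin 3) ℝ,
        f.totalDegree ≤ 3 ∧ ∀ q, ∀ α : Fin 3 → ℕ, (∑ i, α i) ≤ 1 →
          MvPolynomial.eval (X q) (pderivPow α f) = c q α := by
  refine ⟨![![(0:ℝ),0,0], ![1,0,0], ![0,1,0], ![0,0,1], ![1,1,1]], Xinj, ?_⟩
  intro c
  set F : MvPolynomial (Fin 3) ℝ := monomial (sgl 0 0 0) ((1) * c 0 ek0) + (monomial (sgl 0 0 1) ((1) * c 0 ek3) + (monomial (sgl 0 0 2) ((-3) * c 0 ek0 + (-2) * c 0 ek3 + (3) * c 3 ek0 + (-1) * c 3 ek3) + (monomial (sgl 0 0 3) ((2) * c 0 ek0 + (1) * c 0 ek3 + (-2) * c 3 ek0 + (1) * c 3 ek3) + (monomial (sgl 0 1 0) ((1) * c 0 ek2) + (monomial (sgl 0 1 1) ((2) * c 0 ek0 + (-1) * c 1 ek0 + (-1/2) * c 1 ek2 + (-1/2) * c 1 ek3 + (-1) * c 2 ek0 + (1/2)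 * c 2 ek2 + (1/2) * c 2 ek3 + (-1) * c 3 ek0 + (1/2) * c 3 ek2 + (1/2) * c 3 ek3 + (1) * c 4 ek0 + (-1/2) * c 4 ek2 + (-1/2) * c 4 ek3) + (monomial (sgl 0 1 2) ((-2) * c 0 ek0 + (-1) * c 0 ek2 + (1) * c 1 ek0 + (1/2) * c 1 ek2 + (1/2) * c 1 ek3 + (1) * c 2 ek0 + (-1/2) * c 2 ek2 + (-1/2) * c 2 ek3 + (1) * c 3 ek0 + (1/2) * c 3 ek2 + (-1/2) * c 3 ek3 + (-1) * c 4 ek0 + (1/2) * c 4 ek2 + (1/2) * c 4 ek3) + (monomial (sgl 0 2 0) ((-3) * c 0 ek0 + (-2) * c 0 ek2 + (3) * c 2 ek0 + (-1) * c 2 ek2) + (monomial (sgl 0 2 1) ((-2) * c 0 ek0 + (-1) * c 0 ek3 + (1) * c 1 ek0 + (1/2) * c 1 ek2 + (1/2) * c 1 ek3 + (1) * c 2 ek0 + (-1/2) * c 2 ek2 + (1/2) * c 2 ek3 + (1) * c 3 ek0 + (-1/2) * c 3 ek2 + (-1/2) * c 3 ek3 + (-1) * c 4 ek0 + (1/2)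 * c 4 ek2 + (1/2) * c 4 ek3) + (monomial (sgl 0 3 0) ((2) * c 0 ek0 + (1) * c 0 ek2 + (-2) * c 2 ek0 + (1) * c 2 ek2) + (monomial (sgl 1 0 0) ((1) * c 0 ek1) + (monomial (sgl 1 0 1) ((2) * c 0 ek0 + (-1) * c 1 ek0 + (1/2) * c 1 ek1 + (1/2) * c 1 ek3 + (-1) * c 2 ek0 + (-1/2) * c 2 ek1 + (-1/2) * c 2 ek3 + (-1) * c 3 ek0 + (1/2) * c 3 ek1 + (1/2) * c 3 ek3 + (1) * c 4 ek0 + (-1/2) * c 4 ek1 + (-1/2) * c 4 ek3) + (monomial (sgl 1 0 2) ((-2) * c 0 ek0 + (-1) * c 0 ek1 + (1) * c 1 ek0 + (-1/2) * c 1 ek1 + (-1/2) * c 1 ek3 + (1) * c 2 ek0 + (1/2) * c 2 ek1 + (1/2) * c 2 ek3 + (1) * c 3 ek0 + (1/2) * c 3 ek1 + (-1/2) * c 3 ek3 + (-1) * c 4 ek0 + (1/2) * c 4 ek1 + (1/2) * c 4 ek3) + (monomial (sgl 1 1 0) ((2) * c 0 ek0 + (-1) * c 1 ek0 + (1/2)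 * c 1 ek1 + (1/2) * c 1 ek2 + (-1) * c 2 ek0 + (1/2) * c 2 ek1 + (1/2) * c 2 ek2 + (-1) * c 3 ek0 + (-1/2) * c 3 ek1 + (-1/2) * c 3 ek2 + (1) * c 4 ek0 + (-1/2) * c 4 ek1 + (-1/2) * c 4 ek2) + (monomial (sgl 1 1 1) ((8) * c 0 ek0 + (2) * c 0 ek1 + (2) * c 0 ek2 + (2) * c 0 ek3 + (-4) * c 1 ek0 + (1) * c 1 ek1 + (-1) * c 1 ek2 + (-1) * c 1 ek3 + (-4) * c 2 ek0 + (-1) * c 2 ek1 + (1) * c 2 ek2 + (-1) * c 2 ek3 + (-4) * c 3 ek0 + (-1) * c 3 ek1 + (-1) * c 3 ek2 + (1) * c 3 ek3 + (4) * c 4 ek0 + (-1) * c 4 ek1 + (-1) * c 4 ek2 + (-1) * c 4 ek3) + (monomial (sgl 1 2 0) ((-2) * c 0 ek0 + (-1) * c 0 ek1 + (1) * c 1 ek0 + (-1/2) * c 1 ek1 + (-1/2) * c 1 ek2 + (1) * c 2 ek0 + (1/2) * c 2 ek1 + (-1/2) * c 2 ek2 + (1) * c 3 ek0 + (1/2)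 * c 3 ek1 + (1/2) * c 3 ek2 + (-1) * c 4 ek0 + (1/2) * c 4 ek1 + (1/2) * c 4 ek2) + (monomial (sgl 2 0 0) ((-3) * c 0 ek0 + (-2) * c 0 ek1 + (3) * c 1 ek0 + (-1) * c 1 ek1) + (monomial (sgl 2 0 1) ((-2) * c 0 ek0 + (-1) * c 0 ek3 + (1) * c 1 ek0 + (-1/2) * c 1 ek1 + (1/2) * c 1 ek3 + (1) * c 2 ek0 + (1/2) * c 2 ek1 + (1/2) * c 2 ek3 + (1) * c 3 ek0 + (-1/2) * c 3 ek1 + (-1/2) * c 3 ek3 + (-1) * c 4 ek0 + (1/2) * c 4 ek1 + (1/2) * c 4 ek3) + (monomial (sgl 2 1 0) ((-2) * c 0 ek0 + (-1) * c 0 ek2 + (1) * c 1 ek0 + (-1/2) * c 1 ek1 + (1/2) * c 1 ek2 + (1) * c 2 ek0 + (-1/2) * c 2 ek1 + (-1/2) * c 2 ek2 + (1) * c 3 ek0 + (1/2) * c 3 ek1 + (1/2) * c 3 ek2 + (-1) * c 4 ek0 + (1/2) * c 4 ek1 + (1/2) * c 4 ek2) + (monomial (sgl 3 0 0) ((2)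 * c 0 ek0 + (1) * c 0 ek1 + (-2) * c 1 ek0 + (1) * c 1 ek1)))))))))))))))))))) with hF
  refine ⟨F, ⟨?_, ?_⟩, ?_⟩
  · rw [hF]
    repeat' apply tdadd
    all_goals { apply tdmon; norm_num }
  · intro q α hα
    rw [Fin.sum_univ_three] at hα
    have hcase : (α 0 = 0 ∧ α 1 = 0 ∧ α 2 = 0) ∨ (α 0 = 1 ∧ α 1 = 0 ∧ α 2 = 0) ∨ (α 0 = 0 ∧ α 1 = 1 ∧ α 2 = 0) ∨ (α 0 = 0 ∧ α 1 = 0 ∧ α 2 = 1) := by omega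
    rcases hcase with ⟨e0,e1,e2⟩ | ⟨e0,e1,e2⟩ | ⟨e0,e1,e2⟩ | ⟨e0,e1,e2⟩
    · have hα4 : α = ek0 := by
        funext i; fin_cases i <;> first | exact e0 | exact e1 | exact e2
      rw [hα4, pp_id ek0 rfl rfl rfl, hF]
      rcases fin5cases q with rfl | rfl | rfl | rfl | rfl <;>
        (simp [pderiv_monomial, eval_monomial, Finsupp.prod_pow, Fin.prod_univ_three, sgl, Finsupp.tsub_apply, Finsupp.single_apply]; try ring)
    · have hα4 : α = ek1 := by
        funext i; fin_cases i <;> first | exact e0 | exact e1 | exact e2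
      rw [hα4, pp_d0 ek1 rfl rfl rfl, hF]
      rcases fin5cases q with rfl | rfl | rfl | rfl | rfl <;>
        (simp [pderiv_monomial, eval_monomial, Finsupp.prod_pow, Fin.prod_univ_three, sgl, Finsupp.tsub_apply, Finsupp.single_apply]; try ring)
    · have hα4 : α = ek2 := by
        funext i; fin_cases i <;> first | exact e0 | exact e1 | exact e2
      rw [hα4, pp_d1 ek2 rfl rfl rfl, hF]
      rcases fin5cases q with rfl | rfl | rfl | rfl | rfl <;>
        (simp [pderiv_monomial, eval_monomial, Finsupp.prod_pow, Fin.prod_univ_three, sgl, Finsupp.tsub_apply, Finsupp.single_apply]; try ring)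
    · have hα4 : α = ek3 := by
        funext i; fin_cases i <;> first | exact e0 | exact e1 | exact e2
      rw [hα4, pp_d2 ek3 rfl rfl rfl, hF]
      rcases fin5cases q with rfl | rfl | rfl | rfl | rfl <;>
        (simp [pderiv_monomial, eval_monomial, Finsupp.prod_pow, Fin.prod_univ_three, sgl, Finsupp.tsub_apply, Finsupp.single_apply]; try ring)
  · rintro y ⟨hydeg, hy⟩
    obtain ⟨u, hu⟩ := rep y hydeg
    have E0 := hy 0 ek0 (by norm_num [Fin.sum_univ_three, ek0])
    rw [hu, pp_id ek0 rfl rfl rfl] at E0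
    have E1 := hy 0 ek1 (by norm_num [Fin.sum_univ_three, ek1])
    rw [hu, pp_d0 ek1 rfl rfl rfl] at E1
    have E2 := hy 0 ek2 (by norm_num [Fin.sum_univ_three, ek2])
    rw [hu, pp_d1 ek2 rfl rfl rfl] at E2
    have E3 := hy 0 ek3 (by norm_num [Fin.sum_univ_three, ek3])
    rw [hu, pp_d2 ek3 rfl rfl rfl] at E3
    have E4 := hy 1 ek0 (by norm_num [Fin.sum_univ_three, ek0])
    rw [hu, pp_id ek0 rfl rfl rfl] at E4
    have E5 := hy 1 ek1 (by norm_num [Fin.sum_univ_three, ek1])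
    rw [hu, pp_d0 ek1 rfl rfl rfl] at E5
    have E6 := hy 1 ek2 (by norm_num [Fin.sum_univ_three, ek2])
    rw [hu, pp_d1 ek2 rfl rfl rfl] at E6
    have E7 := hy 1 ek3 (by norm_num [Fin.sum_univ_three, ek3])
    rw [hu, pp_d2 ek3 rfl rfl rfl] at E7
    have E8 := hy 2 ek0 (by norm_num [Fin.sum_univ_three, ek0])
    rw [hu, pp_id ek0 rfl rfl rfl] at E8
    have E9 := hy 2 ek1 (by norm_num [Fin.sum_univ_three, ek1])
    rw [hu, pp_d0 ek1 rfl rfl rfl] at E9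
    have E10 := hy 2 ek2 (by norm_num [Fin.sum_univ_three, ek2])
    rw [hu, pp_d1 ek2 rfl rfl rfl] at E10
    have E11 := hy 2 ek3 (by norm_num [Fin.sum_univ_three, ek3])
    rw [hu, pp_d2 ek3 rfl rfl rfl] at E11
    have E12 := hy 3 ek0 (by norm_num [Fin.sum_univ_three, ek0])
    rw [hu, pp_id ek0 rfl rfl rfl] at E12
    have E13 := hy 3 ek1 (by norm_num [Fin.sum_univ_three, ek1])
    rw [hu, pp_d0 ek1 rfl rfl rfl] at E13
    have E14 := hy 3 ek2 (by norm_num [Fin.sum_univ_three, ek2])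
    rw [hu, pp_d1 ek2 rfl rfl rfl] at E14
    have E15 := hy 3 ek3 (by norm_num [Fin.sum_univ_three, ek3])
    rw [hu, pp_d2 ek3 rfl rfl rfl] at E15
    have E16 := hy 4 ek0 (by norm_num [Fin.sum_univ_three, ek0])
    rw [hu, pp_id ek0 rfl rfl rfl] at E16
    have E17 := hy 4 ek1 (by norm_num [Fin.sum_univ_three, ek1])
    rw [hu, pp_d0 ek1 rfl rfl rfl] at E17
    have E18 := hy 4 ek2 (by norm_num [Fin.sum_univ_three, ek2])
    rw [hu, pp_d1 ek2 rfl rfl rfl] at E18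
    have E19 := hy 4 ek3 (by norm_num [Fin.sum_univ_three, ek3])
    rw [hu, pp_d2 ek3 rfl rfl rfl] at E19
    simp [pderiv_monomial, eval_monomial, Finsupp.prod_pow, Fin.prod_univ_three, sgl, Finsupp.tsub_apply, Finsupp.single_apply] at E0 E1 E2 E3 E4 E5 E6 E7 E8 E9 E10 E11 E12 E13 E14 E15 E16 E17 E18 E19
    have hq0 : u 0 = (1) * c 0 ek0 := by linear_combination (1) * E0
    have hq1 : u 1 = (1) * c 0 ek3 := by linear_combination (1) * E3
    have hq2 : u 2 = (-3) * c 0 ek0 + (-2) * c 0 ek3 + (3) * c 3 ek0 + (-1) * c 3 ek3 := by linear_combination (-3) * E0 + (-2) * E3 + (3) * E12 + (-1) * E15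
    have hq3 : u 3 = (2) * c 0 ek0 + (1) * c 0 ek3 + (-2) * c 3 ek0 + (1) * c 3 ek3 := by linear_combination (2) * E0 + (1) * E3 + (-2) * E12 + (1) * E15
    have hq4 : u 4 = (1) * c 0 ek2 := by linear_combination (1) * E2
    have hq5 : u 5 = (2) * c 0 ek0 + (-1) * c 1 ek0 + (-1/2) * c 1 ek2 + (-1/2) * c 1 ek3 + (-1) * c 2 ek0 + (1/2) * c 2 ek2 + (1/2) * c 2 ek3 + (-1) * c 3 ek0 + (1/2) * c 3 ek2 + (1/2) * c 3 ek3 + (1) * c 4 ek0 + (-1/2) * c 4 ek2 + (-1/2) * c 4 ek3 := by linear_combination (2) * E0 + (-1) * E4 + (-1/2) * E6 + (-1/2) * E7 + (-1) * E8 + (1/2) * E10 + (1/2) * E11 + (-1) * E12 + (1/2) * E14 + (1/2) * E15 + (1) * E16 + (-1/2) * E18 + (-1/2) * E19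
    have hq6 : u 6 = (-2) * c 0 ek0 + (-1) * c 0 ek2 + (1) * c 1 ek0 + (1/2) * c 1 ek2 + (1/2) * c 1 ek3 + (1) * c 2 ek0 + (-1/2) * c 2 ek2 + (-1/2) * c 2 ek3 + (1) * c 3 ek0 + (1/2) * c 3 ek2 + (-1/2) * c 3 ek3 + (-1) * c 4 ek0 + (1/2) * c 4 ek2 + (1/2) * c 4 ek3 := by linear_combination (-2) * E0 + (-1) * E2 + (1) * E4 + (1/2) * E6 + (1/2) * E7 + (1) * E8 + (-1/2) * E10 + (-1/2) * E11 + (1) * E12 + (1/2) * E14 + (-1/2) * E15 + (-1) * E16 + (1/2) * E18 + (1/2) * E19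
    have hq7 : u 7 = (-3) * c 0 ek0 + (-2) * c 0 ek2 + (3) * c 2 ek0 + (-1) * c 2 ek2 := by linear_combination (-3) * E0 + (-2) * E2 + (3) * E8 + (-1) * E10
    have hq8 : u 8 = (-2) * c 0 ek0 + (-1) * c 0 ek3 + (1) * c 1 ek0 + (1/2) * c 1 ek2 + (1/2) * c 1 ek3 + (1) * c 2 ek0 + (-1/2) * c 2 ek2 + (1/2) * c 2 ek3 + (1) * c 3 ek0 + (-1/2) * c 3 ek2 + (-1/2) * c 3 ek3 + (-1) * c 4 ek0 + (1/2) * c 4 ek2 + (1/2) * c 4 ek3 := by linear_combination (-2) * E0 + (-1) * E3 + (1) * E4 + (1/2) * E6 + (1/2) * E7 + (1) * E8 + (-1/2) * E10 + (1/2) * E11 + (1) * E12 + (-1/2) * E14 + (-1/2) * E15 + (-1) * E16 + (1/2) * E18 + (1/2) * E19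
    have hq9 : u 9 = (2) * c 0 ek0 + (1) * c 0 ek2 + (-2) * c 2 ek0 + (1) * c 2 ek2 := by linear_combination (2) * E0 + (1) * E2 + (-2) * E8 + (1) * E10
    have hq10 : u 10 = (1) * c 0 ek1 := by linear_combination (1) * E1
    have hq11 : u 11 = (2) * c 0 ek0 + (-1) * c 1 ek0 + (1/2) * c 1 ek1 + (1/2) * c 1 ek3 + (-1) * c 2 ek0 + (-1/2) * c 2 ek1 + (-1/2) * c 2 ek3 + (-1) * c 3 ek0 + (1/2) * c 3 ek1 + (1/2) * c 3 ek3 + (1) * c 4 ek0 + (-1/2) * c 4 ek1 + (-1/2) * c 4 ek3 := by linear_combination (2) * E0 + (-1) * E4 + (1/2) * E5 + (1/2) * E7 + (-1) * E8 + (-1/2) * E9 + (-1/2) * E11 + (-1) * E12 + (1/2) * E13 + (1/2) * E15 + (1) * E16 + (-1/2) * E17 + (-1/2) * E19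
    have hq12 : u 12 = (-2) * c 0 ek0 + (-1) * c 0 ek1 + (1) * c 1 ek0 + (-1/2) * c 1 ek1 + (-1/2) * c 1 ek3 + (1) * c 2 ek0 + (1/2) * c 2 ek1 + (1/2) * c 2 ek3 + (1) * c 3 ek0 + (1/2) * c 3 ek1 + (-1/2) * c 3 ek3 + (-1) * c 4 ek0 + (1/2) * c 4 ek1 + (1/2) * c 4 ek3 := by linear_combination (-2) * E0 + (-1) * E1 + (1) * E4 + (-1/2) * E5 + (-1/2) * E7 + (1) * E8 + (1/2) * E9 + (1/2) * E11 + (1) * E12 + (1/2) * E13 + (-1/2) * E15 + (-1) * E16 + (1/2) * E17 + (1/2) * E19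
    have hq13 : u 13 = (2) * c 0 ek0 + (-1) * c 1 ek0 + (1/2) * c 1 ek1 + (1/2) * c 1 ek2 + (-1) * c 2 ek0 + (1/2) * c 2 ek1 + (1/2) * c 2 ek2 + (-1) * c 3 ek0 + (-1/2) * c 3 ek1 + (-1/2) * c 3 ek2 + (1) * c 4 ek0 + (-1/2) * c 4 ek1 + (-1/2) * c 4 ek2 := by linear_combination (2) * E0 + (-1) * E4 + (1/2) * E5 + (1/2) * E6 + (-1) * E8 + (1/2) * E9 + (1/2) * E10 + (-1) * E12 + (-1/2) * E13 + (-1/2) * E14 + (1) * E16 + (-1/2) * E17 + (-1/2) * E18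
    have hq14 : u 14 = (8) * c 0 ek0 + (2) * c 0 ek1 + (2) * c 0 ek2 + (2) * c 0 ek3 + (-4) * c 1 ek0 + (1) * c 1 ek1 + (-1) * c 1 ek2 + (-1) * c 1 ek3 + (-4) * c 2 ek0 + (-1) * c 2 ek1 + (1) * c 2 ek2 + (-1) * c 2 ek3 + (-4) * c 3 ek0 + (-1) * c 3 ek1 + (-1) * c 3 ek2 + (1) * c 3 ek3 + (4) * c 4 ek0 + (-1) * c 4 ek1 + (-1) * c 4 ek2 + (-1) * c 4 ek3 := by linear_combination (8) * E0 + (2) * E1 + (2) * E2 + (2) * E3 + (-4) * E4 + (1) * E5 + (-1) * E6 + (-1) * E7 + (-4) * E8 + (-1) * E9 + (1) * E10 + (-1) * E11 + (-4) * E12 + (-1) * E13 + (-1) * E14 + (1) * E15 + (4) * E16 + (-1) * E17 + (-1) * E18 + (-1) * E19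
    have hq15 : u 15 = (-2) * c 0 ek0 + (-1) * c 0 ek1 + (1) * c 1 ek0 + (-1/2) * c 1 ek1 + (-1/2) * c 1 ek2 + (1) * c 2 ek0 + (1/2) * c 2 ek1 + (-1/2) * c 2 ek2 + (1) * c 3 ek0 + (1/2) * c 3 ek1 + (1/2) * c 3 ek2 + (-1) * c 4 ek0 + (1/2) * c 4 ek1 + (1/2) * c 4 ek2 := by linear_combination (-2) * E0 + (-1) * E1 + (1) * E4 + (-1/2) * E5 + (-1/2) * E6 + (1) * E8 + (1/2) * E9 + (-1/2) * E10 + (1) * E12 + (1/2) * E13 + (1/2) * E14 + (-1) * E16 + (1/2) * E17 + (1/2) * E18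
    have hq16 : u 16 = (-3) * c 0 ek0 + (-2) * c 0 ek1 + (3) * c 1 ek0 + (-1) * c 1 ek1 := by linear_combination (-3) * E0 + (-2) * E1 + (3) * E4 + (-1) * E5
    have hq17 : u 17 = (-2) * c 0 ek0 + (-1) * c 0 ek3 + (1) * c 1 ek0 + (-1/2) * c 1 ek1 + (1/2) * c 1 ek3 + (1) * c 2 ek0 + (1/2) * c 2 ek1 + (1/2) * c 2 ek3 + (1) * c 3 ek0 + (-1/2) * c 3 ek1 + (-1/2) * c 3 ek3 + (-1) * c 4 ek0 + (1/2) * c 4 ek1 + (1/2) * c 4 ek3 := by linear_combination (-2) * E0 + (-1) * E3 + (1) * E4 + (-1/2) * E5 + (1/2) * E7 + (1) * E8 + (1/2) * E9 + (1/2) * E11 + (1) * E12 + (-1/2) * E13 + (-1/2) * E15 + (-1) * E16 + (1/2) * E17 + (1/2) * E19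
    have hq18 : u 18 = (-2) * c 0 ek0 + (-1) * c 0 ek2 + (1) * c 1 ek0 + (-1/2) * c 1 ek1 + (1/2) * c 1 ek2 + (1) * c 2 ek0 + (-1/2) * c 2 ek1 + (-1/2) * c 2 ek2 + (1) * c 3 ek0 + (1/2) * c 3 ek1 + (1/2) * c 3 ek2 + (-1) * c 4 ek0 + (1/2) * c 4 ek1 + (1/2) * c 4 ek2 := by linear_combination (-2) * E0 + (-1) * E2 + (1) * E4 + (-1/2) * E5 + (1/2) * E6 + (1) * E8 + (-1/2) * E9 + (-1/2) * E10 + (1) * E12 + (1/2) * E13 + (1/2) * E14 + (-1) * E16 + (1/2) * E17 + (1/2) * E18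
    have hq19 : u 19 = (2) * c 0 ek0 + (1) * c 0 ek1 + (-2) * c 1 ek0 + (1) * c 1 ek1 := by linear_combination (2) * E0 + (1) * E1 + (-2) * E4 + (1) * E5
    rw [hu, hq0, hq1, hq2, hq3, hq4, hq5, hq6, hq7, hq8, hq9, hq10, hq11, hq12, hq13, hq14, hq15, hq16, hq17, hq18, hq19, hF]
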